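/- For fixed constants c₁ = O(1) and c₂ = O(1), the upper bound for the partly filled Sudoku satisfies ln S_U(n; c₁, c₂) = 2n⁴ ln n − 2.5 n⁴ + O(n³ ln n) as n → ∞; i.e., the leading asymptotics coincide with those of the unconstrained bound S_U(n). -/

import Mathlib

open Finset

/-- The permanent-based upper bound `S_U(n; c₁, c₂)` for the number of completions
of an `(n; c₁, c₂)` partly filled Sudoku (indices shifted down by one). -/
noncomputable def SUpf (n c₁ c₂ : ℕ) : ℝ :=
  (∏ i ∈ range c₁,
    (∏ j ∈ range (i + 1),
      ((n ^ 2 - i * n - j).factorial : ℝ) ^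
        (((n : ℝ) ^ 2 - c₂ * n) / ((n : ℝ) ^ 2 - i * n - j))) *
    (∏ j ∈ Ico (i + 1) n,
      ((n ^ 2 - j * n).factorial : ℝ) ^
        (((n : ℝ) ^ 2 - c₂ * n) / ((n : ℝ) ^ 2 - j * n)))) *
  (∏ i ∈ Ico c₁ n,
    (∏ j ∈ range (i + 1),
      ((n ^ 2 - i * n - j).factorial : ℝ) ^
        ((n ^ 2 : ℝ) / ((n : ℝ) ^ 2 - i * n - j))) *
    (∏ j ∈ Ico (i + 1) n,
      ((n ^ 2 - j * n).factorial : ℝ) ^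
        ((n ^ 2 : ℝ) / ((n : ℝ) ^ 2 - j * n))))


set_option maxHeartbeats 1000000

namespace SUaux

lemma log_diff_ge (k : ℕ) (hk : 1 ≤ k) :
    1/((k:ℝ)+1) ≤ Real.log (k+1) - Real.log k := by
  have hk0 : (0:ℝ) < k := by exact_mod_cast hk
  have h := Real.log_le_sub_one_of_pos (show (0:ℝ) < k / (k+1) by positivity)
  rw [Real.log_div (by positivity) (by positivity)] at h
  have : (k:ℝ)/(k+1) - 1 = -(1/((k:ℝ)+1)) := by field_simp; ring
  linarith [this ▸ h]

lemma log_diff_le (k : ℕ) (hk : 1 ≤ k) :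
    Real.log (k+1) - Real.log k ≤ 1/(k:ℝ) := by
  have hk0 : (0:ℝ) < k := by exact_mod_cast hk
  have h := Real.log_le_sub_one_of_pos (show (0:ℝ) < ((k:ℝ)+1) / k by positivity)
  rw [Real.log_div (by positivity) (by positivity)] at h
  have : ((k:ℝ)+1)/k - 1 = 1/(k:ℝ) := by field_simp; ring
  linarith [this ▸ h]

lemma harmonic_le : ∀ N : ℕ, ∑ k ∈ range N, (1:ℝ)/(k+1) ≤ 1 + Real.log N := by
  intro N
  induction N with
  | zero => simp
  | succ N ih =>
    rw [Finset.sum_range_succ]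
    rcases Nat.eq_zero_or_pos N with h | h
    · subst h; norm_num
    · have h1 := log_diff_ge N h
      push_cast at h1 ⊢
      linarith

lemma inv_sum_Icc (N : ℕ) : ∑ m ∈ Icc 1 N, (1:ℝ)/m ≤ 1 + Real.log N := by
  have h : Icc 1 N = Ico 1 (N+1) := rfl
  rw [h, Finset.sum_Ico_eq_sum_range]
  simp only [Nat.add_sub_cancel]
  have e : ∀ k ∈ range N, (1:ℝ)/((1+k:ℕ)) = (1:ℝ)/(k+1) := by
    intro k _; push_cast; rw [add_comm]
  rw [Finset.sum_congr rfl e]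
  exact harmonic_le N

lemma log_factorial_ge (m : ℕ) (hm : 1 ≤ m) :
    (m:ℝ) * (Real.log m - 1) + 1 ≤ Real.log m.factorial := by
  induction m with
  | zero => omega
  | succ m ih =>
    rcases Nat.eq_zero_or_pos m with h | h
    · subst h; norm_num
    · have hm0 : (0:ℝ) < m := by exact_mod_cast h
      have hih := ih h
      have hstep := log_diff_le m h
      have hfac : Real.log (m+1).factorial = Real.log m.factorial + Real.log (m+1) := by
        rw [Nat.factorial_succ]
        push_cast
        rw [Real.log_mul (by positivity) (by positivity)]
        ring
      push_cast at hfac ⊢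
      rw [hfac]
      have : (m:ℝ) * (Real.log (↑m+1) - Real.log m) ≤ 1 := by
        calc (m:ℝ) * (Real.log (↑m+1) - Real.log m) ≤ (m:ℝ) * (1/m) := by
              apply mul_le_mul_of_nonneg_left _ (le_of_lt hm0)
              push_cast at hstep; linarith
          _ = 1 := by field_simp
      nlinarith [this, hih]

lemma log_factorial_le (m : ℕ) :
    Real.log m.factorial ≤ (m:ℝ) * (Real.log m - 1) + (1 + Real.log m) := by
  induction m with
  | zero => simp
  | succ m ih =>
    rcases Nat.eq_zero_or_pos m with h | h
    · subst h; norm_num [Nat.factorial]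
    · have hm0 : (0:ℝ) < m := by exact_mod_cast h
      have hstep := log_diff_ge m h
      have hfac : Real.log (m+1).factorial = Real.log m.factorial + Real.log (m+1) := by
        rw [Nat.factorial_succ]
        push_cast
        rw [Real.log_mul (by positivity) (by positivity)]
        ring
      push_cast at hfac hstep ⊢
      rw [hfac]
      -- need: log m! + log(m+1) ≤ (m+1)(log(m+1)-1) + 1 + log(m+1)
      -- have ih : log m! ≤ m(log m - 1) + 1 + log m
      -- suffices m log m + log m ≤ (m+1) log(m+1) - 1
      -- i.e. 1 ≤ (m+1)(log(m+1) - log m), true since log diff ≥ 1/(m+1)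
      have key : 1 ≤ ((m:ℝ)+1) * (Real.log (↑m+1) - Real.log m) := by
        calc (1:ℝ) = ((m:ℝ)+1) * (1/((m:ℝ)+1)) := by field_simp
          _ ≤ _ := by apply mul_le_mul_of_nonneg_left hstep (by positivity)
      nlinarith [key, ih]


lemma log_factorial_sum (n : ℕ) :
    Real.log n.factorial = ∑ k ∈ range n, Real.log (k+1) := by
  induction n with
  | zero => simp
  | succ n ih =>
    rw [Finset.sum_range_succ, ← ih, Nat.factorial_succ]
    push_cast
    rw [Real.log_mul (by positivity) (by positivity)]
    ring

lemma sum_mul_log (n : ℕ) :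
    |∑ k ∈ range n, ((k:ℝ)+1) * Real.log (k+1) -
      ((n:ℝ)^2 * Real.log n / 2 - (n:ℝ)^2/4)| ≤ n * (1 + Real.log n) := by
  induction n with
  | zero => simp
  | succ n ih =>
    rcases Nat.eq_zero_or_pos n with h | h
    · subst h
      simp only [range_zero, sum_empty, range_one, sum_range_succ]
      norm_num
    · have hn0 : (0:ℝ) < n := by exact_mod_cast h
      have hlogmono : Real.log n ≤ Real.log (n+1) := by
        apply Real.log_le_log (by positivity); push_cast; linarith
      have hlog0 : 0 ≤ Real.log n := Real.log_natCast_nonneg n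
      have hu1 : 1/((n:ℝ)+1) ≤ Real.log (↑n+1) - Real.log n := by
        have := Real.log_le_sub_one_of_pos (show (0:ℝ) < (n:ℝ) / ((n:ℝ)+1) by positivity)
        rw [Real.log_div (by positivity) (by positivity)] at this
        have e : (n:ℝ)/((n:ℝ)+1) - 1 = -(1/((n:ℝ)+1)) := by field_simp; ring
        linarith [e ▸ this]
      have hu2 : Real.log (↑n+1) - Real.log n ≤ 1/(n:ℝ) := by
        have := Real.log_le_sub_one_of_pos (show (0:ℝ) < ((n:ℝ)+1) / n by positivity)
        rw [Real.log_div (by positivity) (by positivity)] at this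
        have e : ((n:ℝ)+1)/(n:ℝ) - 1 = 1/(n:ℝ) := by field_simp; ring
        linarith [e ▸ this]
      rw [Finset.sum_range_succ]
      push_cast at ih ⊢
      set u : ℝ := Real.log (↑n+1) - Real.log n with hu
      -- step = (n+1)log(n+1) - (F(n+1)-F(n)) = (1/2) log(n+1) - n² u /2 + (2n+1)/4
      have hstepabs : |((n:ℝ)+1) * Real.log (↑n+1) -
          ((((n:ℝ)+1)^2 * Real.log (↑n+1) / 2 - ((n:ℝ)+1)^2/4) -
           ((n:ℝ)^2 * Real.log n / 2 - (n:ℝ)^2/4))| ≤ 1 + Real.log (↑n+1) := by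
        have e : ((n:ℝ)+1) * Real.log (↑n+1) -
            ((((n:ℝ)+1)^2 * Real.log (↑n+1) / 2 - ((n:ℝ)+1)^2/4) -
             ((n:ℝ)^2 * Real.log n / 2 - (n:ℝ)^2/4)) =
            (1/2) * Real.log (↑n+1) - (n:ℝ)^2 * u / 2 + (2*(n:ℝ)+1)/4 := by
          rw [hu]; ring
        rw [e, abs_le]
        constructor
        · -- lower: ≥ (1/2)log(n+1) - n/2 + (2n+1)/4 = (1/2)log(n+1)+1/4 ≥ -(1+log(n+1))
          have : (n:ℝ)^2 * u / 2 ≤ (n:ℝ)/2 := by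
            have : (n:ℝ)^2 * u ≤ (n:ℝ)^2 * (1/n) := by
              apply mul_le_mul_of_nonneg_left hu2 (by positivity)
            have e2 : (n:ℝ)^2 * (1/n) = n := by field_simp
            linarith [e2 ▸ this]
          have hlp : 0 ≤ Real.log (↑n+1) := by
            rw [hu] at *; nlinarith [hlog0, hu1]
          nlinarith
        · -- upper: ≤ (1/2)log(n+1) - n²/(2(n+1)) + (2n+1)/4 ≤ log(n+1) + 1
          have h1 : (n:ℝ)^2 * (1/((n:ℝ)+1)) ≤ (n:ℝ)^2 * u := by
            apply mul_le_mul_of_nonneg_left hu1 (by positivity)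
          have hlp : 0 ≤ Real.log (↑n+1) := by nlinarith [hlog0, hu1]
          have h2 : (2*(n:ℝ)+1)/4 - (n:ℝ)^2 * (1/((n:ℝ)+1)) / 2 ≤ 1 := by
            have e2 : (2*(n:ℝ)+1)/4 - (n:ℝ)^2 * (1/((n:ℝ)+1)) / 2 - 1
                = -(((n:ℝ)+3)/(4*((n:ℝ)+1))) := by
              field_simp; ring
            nlinarith [div_nonneg (show (0:ℝ) ≤ (n:ℝ)+3 by linarith)
              (show (0:ℝ) ≤ 4*((n:ℝ)+1) by linarith), e2]
          nlinarith
      have e3 : (∑ k ∈ range n, ((k:ℝ)+1) * Real.log (↑k+1) + ((n:ℝ)+1) * Real.log (↑n+1)) -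
          (((n:ℝ)+1)^2 * Real.log (↑n+1) / 2 - ((n:ℝ)+1)^2/4)
          = (∑ k ∈ range n, ((k:ℝ)+1) * Real.log (↑k+1) -
              ((n:ℝ)^2 * Real.log n / 2 - (n:ℝ)^2/4)) +
            (((n:ℝ)+1) * Real.log (↑n+1) -
              ((((n:ℝ)+1)^2 * Real.log (↑n+1) / 2 - ((n:ℝ)+1)^2/4) -
               ((n:ℝ)^2 * Real.log n / 2 - (n:ℝ)^2/4))) := by ring
      rw [e3]
      refine le_trans (abs_add_le _ _) (le_trans (add_le_add ih hstepabs) ?_)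
      nlinarith [hlogmono, hlog0]


lemma nsq_arith (n i j : ℕ) (hi : i < n) (hj : j < i + 1) :
    i*n + j + 1 ≤ n^2 := by
  have h2 : i*n ≤ (n-1)*n := Nat.mul_le_mul_right n (by omega)
  have h3 : (n-1)*n + (n-1) + 1 = n^2 := by
    nlinarith [Nat.sub_add_cancel (show 1 ≤ n by omega)]
  omega

lemma mu_inv_sum (n : ℕ) (f : ℕ → ℝ) (hf : ∀ m, 0 ≤ f m) :
    ∑ i ∈ range n, ∑ j ∈ range (i+1), f (n^2 - i*n - j) ≤ ∑ m ∈ Icc 1 (n^2), f m := by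
  rw [Finset.sum_sigma']
  set T := (range n).sigma (fun i => range (i+1)) with hT
  have hinj : ∀ p ∈ T, ∀ q ∈ T,
      n^2 - p.1*n - p.2 = n^2 - q.1*n - q.2 → p = q := by
    rintro ⟨i₁,j₁⟩ h₁ ⟨i₂,j₂⟩ h₂ heq
    simp only [hT, Finset.mem_sigma, Finset.mem_range] at h₁ h₂
    obtain ⟨hi₁, hj₁⟩ := h₁; obtain ⟨hi₂, hj₂⟩ := h₂
    simp only at heq
    have e₁ := nsq_arith n i₁ j₁ hi₁ hj₁
    have e₂ := nsq_arith n i₂ j₂ hi₂ hj₂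
    have hsum : i₁*n + j₁ = i₂*n + j₂ := by omega
    have hi : i₁ = i₂ := by
      rcases lt_trichotomy i₁ i₂ with h | h | h
      · exfalso
        have : (i₁+1)*n ≤ i₂*n := Nat.mul_le_mul_right n (by omega)
        nlinarith
      · exact h
      · exfalso
        have : (i₂+1)*n ≤ i₁*n := Nat.mul_le_mul_right n (by omega)
        nlinarith
    subst hi
    have hj : j₁ = j₂ := by omega
    subst hj; rfl
  rw [← Finset.sum_image hinj]
  apply Finset.sum_le_sum_of_subset_of_nonneg
  · intro m hm
    simp only [Finset.mem_image] at hm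
    obtain ⟨⟨i,j⟩, hp, hm⟩ := hm
    simp only [hT, Finset.mem_sigma, Finset.mem_range] at hp
    dsimp only at hm
    have := nsq_arith n i j hp.1 hp.2
    simp only [Finset.mem_Icc]
    omega
  · intro m _ _; exact hf m

lemma sum_Ico_swap (n : ℕ) (f : ℕ → ℝ) :
    ∑ i ∈ range n, ∑ j ∈ Ico (i+1) n, f j = ∑ j ∈ range n, (j:ℝ) * f j := by
  rw [Finset.range_eq_Ico, Finset.sum_Ico_Ico_comm']
  apply Finset.sum_congr rfl
  intro j _
  rw [Finset.sum_const, Nat.card_Ico, Nat.sub_zero, nsmul_eq_mul]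

lemma sum_two_mul_add_one (n : ℕ) :
    ∑ k ∈ range n, (2*(k:ℝ)+1) = (n:ℝ)^2 := by
  induction n with
  | zero => simp
  | succ n ih => rw [Finset.sum_range_succ, ih]; push_cast; ring


lemma cast_mu (n i j : ℕ) (hi : i < n) (hj : j < i+1) :
    ((n^2 - i*n - j : ℕ):ℝ) = (n:ℝ)^2 - i*n - j := by
  have h := nsq_arith n i j hi hj
  have e : n^2 - i*n - j = n^2 - (i*n + j) := by omega
  rw [e, Nat.cast_sub (by omega)]
  push_cast; ring

lemma cast_mu_ge (n i j : ℕ) (hi : i < n) (hj : j < i+1) :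
    (1:ℝ) ≤ ((n^2 - i*n - j : ℕ):ℝ) := by
  have h := nsq_arith n i j hi hj
  have h1 : 1 ≤ n^2 - i*n - j := by omega
  exact_mod_cast h1

lemma cast_nu (n j : ℕ) (hj : j < n) :
    ((n^2 - j*n : ℕ):ℝ) = (n:ℝ)^2 - j*n := by
  have h : j*n ≤ n^2 := by
    calc j*n ≤ n*n := Nat.mul_le_mul_right n (by omega)
    _ = n^2 := by ring
  rw [Nat.cast_sub h]; push_cast; ring

lemma nu_eq (n j : ℕ) : n^2 - j*n = (n-j)*n := by
  rcases le_or_gt j n with h | h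
  · have h2 : n^2 = (n-j)*n + j*n := by
      rw [← Nat.add_mul, Nat.sub_add_cancel h]; ring
    omega
  · have h1 : n^2 ≤ j*n := by
      calc n^2 = n*n := by ring
      _ ≤ j*n := Nat.mul_le_mul_right n (by omega)
    have h2 : n - j = 0 := by omega
    rw [h2]
    omega

lemma cast_nu_ge (n j : ℕ) (hj : j < n) :
    (n:ℝ) ≤ ((n^2 - j*n : ℕ):ℝ) := by
  have : n ≤ n^2 - j*n := by
    rw [nu_eq]
    calc n = 1*n := (one_mul n).symm
    _ ≤ (n-j)*n := Nat.mul_le_mul_right n (by omega)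
  exact_mod_cast this

lemma log_fact_le_two_mul (n m : ℕ) (hn : 1 ≤ n) (h : m ≤ n^2) :
    Real.log m.factorial ≤ 2 * m * Real.log n := by
  calc Real.log m.factorial ≤ Real.log ((n^2)^m : ℕ) := by
        apply Real.log_le_log (by exact_mod_cast Nat.factorial_pos m)
        exact_mod_cast le_trans m.factorial_le_pow (Nat.pow_le_pow_left h m)
  _ = 2 * m * Real.log n := by
        push_cast
        rw [Real.log_pow, Real.log_pow]
        push_cast; ring


noncomputable def row (n : ℕ) (c : ℝ) (i : ℕ) : ℝ :=
  (∑ j ∈ range (i+1),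
      (((n:ℝ)^2 - c*n)/((n:ℝ)^2 - i*n - j)) * Real.log ((n^2 - i*n - j).factorial)) +
  ∑ j ∈ Ico (i+1) n,
      (((n:ℝ)^2 - c*n)/((n:ℝ)^2 - j*n)) * Real.log ((n^2 - j*n).factorial)

lemma log_rowprod (n : ℕ) (c : ℝ) (s : Finset ℕ) :
    Real.log (∏ i ∈ s,
      (∏ j ∈ range (i+1), ((n^2 - i*n - j).factorial : ℝ) ^
          (((n:ℝ)^2 - c*n)/((n:ℝ)^2 - i*n - j))) *
      (∏ j ∈ Ico (i+1) n, ((n^2 - j*n).factorial : ℝ) ^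
          (((n:ℝ)^2 - c*n)/((n:ℝ)^2 - j*n)))) =
    ∑ i ∈ s, row n c i := by
  rw [Real.log_prod]
  · apply Finset.sum_congr rfl
    intro i _
    rw [Real.log_mul, Real.log_prod, Real.log_prod]
    · unfold row
      congr 1
      · exact Finset.sum_congr rfl fun j _ =>
          Real.log_rpow (by exact_mod_cast Nat.factorial_pos _) _
      · exact Finset.sum_congr rfl fun j _ =>
          Real.log_rpow (by exact_mod_cast Nat.factorial_pos _) _
    · intro j _
      exact ne_of_gt (Real.rpow_pos_of_pos (by exact_mod_cast Nat.factorial_pos _) _)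
    · intro j _
      exact ne_of_gt (Real.rpow_pos_of_pos (by exact_mod_cast Nat.factorial_pos _) _)
    · apply ne_of_gt
      apply Finset.prod_pos
      intro j _
      exact Real.rpow_pos_of_pos (by exact_mod_cast Nat.factorial_pos _) _
    · apply ne_of_gt
      apply Finset.prod_pos
      intro j _
      exact Real.rpow_pos_of_pos (by exact_mod_cast Nat.factorial_pos _) _
  · intro i _
    apply ne_of_gt
    apply mul_pos <;>
    · apply Finset.prod_pos
      intro j _
      exact Real.rpow_pos_of_pos (by exact_mod_cast Nat.factorial_pos _) _

lemma log_SUpf_eq (n c₁ c₂ : ℕ) :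
    Real.log (SUpf n c₁ c₂) =
      (∑ i ∈ range c₁, row n (c₂:ℝ) i) + ∑ i ∈ Ico c₁ n, row n 0 i := by
  unfold SUpf
  have h2 : (∏ i ∈ Ico c₁ n,
      (∏ j ∈ range (i + 1), ((n ^ 2 - i * n - j).factorial : ℝ) ^
          ((n ^ 2 : ℝ) / ((n : ℝ) ^ 2 - i * n - j))) *
      (∏ j ∈ Ico (i + 1) n, ((n ^ 2 - j * n).factorial : ℝ) ^
          ((n ^ 2 : ℝ) / ((n : ℝ) ^ 2 - j * n)))) =
      (∏ i ∈ Ico c₁ n,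
      (∏ j ∈ range (i + 1), ((n ^ 2 - i * n - j).factorial : ℝ) ^
          (((n:ℝ)^2 - (0:ℝ)*n) / ((n : ℝ) ^ 2 - i * n - j))) *
      (∏ j ∈ Ico (i + 1) n, ((n ^ 2 - j * n).factorial : ℝ) ^
          (((n:ℝ)^2 - (0:ℝ)*n) / ((n : ℝ) ^ 2 - j * n)))) := by
    norm_num
  rw [h2, Real.log_mul, log_rowprod, log_rowprod]
  · apply ne_of_gt
    apply Finset.prod_pos
    intro i _
    apply mul_pos <;>
    · apply Finset.prod_pos
      intro j _
      exact Real.rpow_pos_of_pos (by exact_mod_cast Nat.factorial_pos _) _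
  · apply ne_of_gt
    apply Finset.prod_pos
    intro i _
    apply mul_pos <;>
    · apply Finset.prod_pos
      intro j _
      exact Real.rpow_pos_of_pos (by exact_mod_cast Nat.factorial_pos _) _

lemma row_def (n : ℕ) (c : ℝ) (i : ℕ) : row n c i =
  (∑ j ∈ range (i+1),
      (((n:ℝ)^2 - c*n)/((n:ℝ)^2 - i*n - j)) * Real.log ((n^2 - i*n - j).factorial)) +
  ∑ j ∈ Ico (i+1) n,
      (((n:ℝ)^2 - c*n)/((n:ℝ)^2 - j*n)) * Real.log ((n^2 - j*n).factorial) := rfl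


noncomputable def rowM (n : ℕ) (i : ℕ) : ℝ :=
  (∑ j ∈ range (i+1), (n:ℝ)^2 * (Real.log ((n^2 - i*n - j : ℕ)) - 1)) +
  ∑ j ∈ Ico (i+1) n, (n:ℝ)^2 * (Real.log ((n^2 - j*n : ℕ)) - 1)

lemma log_fact_approx (m : ℕ) (hm : 1 ≤ m) :
    |Real.log m.factorial - (m:ℝ)*(Real.log m - 1)| ≤ 1 + Real.log m := by
  rw [abs_le]
  constructor
  · linarith [log_factorial_ge m hm, Real.log_natCast_nonneg m]
  · linarith [log_factorial_le m]

lemma mu_bounds (n i j : ℕ) (hi : i < n) (hj : j < i+1) :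
    n^2 - i*n - j ≤ n^2 ∧ 1 ≤ n^2 - i*n - j := by
  have := nsq_arith n i j hi hj
  omega

lemma log_le_two_log (n m : ℕ) (hn : 1 ≤ n) (h : m ≤ n^2) :
    Real.log m ≤ 2 * Real.log n := by
  calc Real.log m ≤ Real.log ((n^2 : ℕ)) := by
        rcases Nat.eq_zero_or_pos m with h0 | h0
        · subst h0
          simp only [Nat.cast_zero, Real.log_zero]
          exact Real.log_natCast_nonneg _
        · exact Real.log_le_log (by exact_mod_cast h0) (by exact_mod_cast h)
  _ = 2 * Real.log n := by push_cast; rw [Real.log_pow]; push_cast; ring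

lemma nu_inv_sum (n i : ℕ) : ∑ j ∈ Ico (i+1) n, (1:ℝ)/((n-j:ℕ)) ≤ 1 + Real.log n := by
  have h1 : ∑ j ∈ Ico (i+1) n, (1:ℝ)/((n-j:ℕ)) ≤ ∑ j ∈ range n, (1:ℝ)/((n-j:ℕ)) := by
    apply Finset.sum_le_sum_of_subset_of_nonneg
    · intro j hj
      simp only [Finset.mem_Ico] at hj
      exact Finset.mem_range.mpr hj.2
    · intro j _ _; positivity
  have h2 : ∑ j ∈ range n, (1:ℝ)/((n-j:ℕ)) = ∑ k ∈ range n, (1:ℝ)/(k+1) := by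
    rw [← Finset.sum_range_reflect (fun j => (1:ℝ)/((n-j:ℕ))) n]
    apply Finset.sum_congr rfl
    intro k hk
    simp only [Finset.mem_range] at hk
    have : n - (n - 1 - k) = k+1 := by omega
    rw [this]
    push_cast; ring
  calc _ ≤ _ := h1
  _ = _ := h2
  _ ≤ _ := harmonic_le n

lemma row_diff (n c₂ i : ℕ) (hn : 2 ≤ n) (hi : i < n) :
    |row n (c₂:ℝ) i - row n 0 i| ≤ (n:ℝ) * (2 * c₂ * n * Real.log n) := by
  have hLn : 0 ≤ Real.log n := Real.log_natCast_nonneg n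
  rw [row_def, row_def]
  have key : ∀ (m : ℕ) (D : ℝ), ((m:ℝ) = D) → 1 ≤ (m:ℝ) → m ≤ n^2 →
      |(((n:ℝ)^2 - c₂*n)/D) * Real.log m.factorial -
       (((n:ℝ)^2 - 0*n)/D) * Real.log m.factorial| ≤ 2 * c₂ * n * Real.log n := by
    intro m D hD hm1 hmn
    have hDpos : (0:ℝ) < D := by rw [← hD]; linarith
    have hg0 : 0 ≤ Real.log m.factorial :=
      Real.log_nonneg (by exact_mod_cast Nat.one_le_iff_ne_zero.mpr m.factorial_ne_zero)
    have e : (((n:ℝ)^2 - c₂*n)/D) * Real.log m.factorial -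
       (((n:ℝ)^2 - 0*n)/D) * Real.log m.factorial
       = -((((c₂:ℝ)*n)/D) * Real.log m.factorial) := by
      field_simp
      ring
    rw [e, abs_neg, abs_of_nonneg (by positivity)]
    rw [div_mul_eq_mul_div, div_le_iff₀ hDpos]
    have hg : Real.log m.factorial ≤ 2 * m * Real.log n :=
      log_fact_le_two_mul n m (by omega) hmn
    calc (c₂:ℝ)*n * Real.log m.factorial ≤ (c₂:ℝ)*n * (2 * m * Real.log n) := by
          apply mul_le_mul_of_nonneg_left hg (by positivity)
    _ = 2 * c₂ * n * Real.log n * (m:ℝ) := by ring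
    _ ≤ 2 * c₂ * n * Real.log n * D := by rw [hD]
  have h1 : |∑ j ∈ range (i+1),
        ((((n:ℝ)^2 - c₂*n)/((n:ℝ)^2 - i*n - j)) * Real.log ((n^2 - i*n - j).factorial) -
         (((n:ℝ)^2 - 0*n)/((n:ℝ)^2 - i*n - j)) * Real.log ((n^2 - i*n - j).factorial))|
      ≤ (i+1:ℝ) * (2 * c₂ * n * Real.log n) := by
    refine le_trans (Finset.abs_sum_le_sum_abs _ _) ?_
    have : ∀ j ∈ range (i+1),
        |(((n:ℝ)^2 - c₂*n)/((n:ℝ)^2 - i*n - j)) * Real.log ((n^2 - i*n - j).factorial) -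
         (((n:ℝ)^2 - 0*n)/((n:ℝ)^2 - i*n - j)) * Real.log ((n^2 - i*n - j).factorial)|
        ≤ 2 * c₂ * n * Real.log n := by
      intro j hj
      simp only [Finset.mem_range] at hj
      exact key _ _ (cast_mu n i j hi hj) (cast_mu_ge n i j hi hj) (by
        have := nsq_arith n i j hi hj; omega)
    refine le_trans (Finset.sum_le_sum this) ?_
    rw [Finset.sum_const, Finset.card_range, nsmul_eq_mul]
    push_cast
    exact le_rfl
  have h2 : |∑ j ∈ Ico (i+1) n,
        ((((n:ℝ)^2 - c₂*n)/((n:ℝ)^2 - j*n)) * Real.log ((n^2 - j*n).factorial) -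
         (((n:ℝ)^2 - 0*n)/((n:ℝ)^2 - j*n)) * Real.log ((n^2 - j*n).factorial))|
      ≤ ((n:ℝ) - (i+1)) * (2 * c₂ * n * Real.log n) := by
    refine le_trans (Finset.abs_sum_le_sum_abs _ _) ?_
    have hb : ∀ j ∈ Ico (i+1) n,
        |(((n:ℝ)^2 - c₂*n)/((n:ℝ)^2 - j*n)) * Real.log ((n^2 - j*n).factorial) -
         (((n:ℝ)^2 - 0*n)/((n:ℝ)^2 - j*n)) * Real.log ((n^2 - j*n).factorial)|
        ≤ 2 * c₂ * n * Real.log n := by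
      intro j hj
      simp only [Finset.mem_Ico] at hj
      refine key _ _ (cast_nu n j hj.2) ?_ (by omega)
      have := cast_nu_ge n j hj.2
      have hn1 : (1:ℝ) ≤ n := by exact_mod_cast (by omega : 1 ≤ n)
      linarith
    refine le_trans (Finset.sum_le_sum hb) ?_
    rw [Finset.sum_const, Nat.card_Ico, nsmul_eq_mul]
    have : ((n - (i+1) : ℕ):ℝ) = (n:ℝ) - (i+1) := by
      rw [Nat.cast_sub (by omega)]; push_cast; ring
    rw [this]
  have e : (∑ j ∈ range (i+1),
      (((n:ℝ)^2 - (c₂:ℝ)*n)/((n:ℝ)^2 - i*n - j)) * Real.log ((n^2 - i*n - j).factorial)) +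
    (∑ j ∈ Ico (i+1) n,
      (((n:ℝ)^2 - (c₂:ℝ)*n)/((n:ℝ)^2 - j*n)) * Real.log ((n^2 - j*n).factorial)) -
    ((∑ j ∈ range (i+1),
      (((n:ℝ)^2 - 0*n)/((n:ℝ)^2 - i*n - j)) * Real.log ((n^2 - i*n - j).factorial)) +
    ∑ j ∈ Ico (i+1) n,
      (((n:ℝ)^2 - 0*n)/((n:ℝ)^2 - j*n)) * Real.log ((n^2 - j*n).factorial))
    = (∑ j ∈ range (i+1),
        ((((n:ℝ)^2 - c₂*n)/((n:ℝ)^2 - i*n - j)) * Real.log ((n^2 - i*n - j).factorial) -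
         (((n:ℝ)^2 - 0*n)/((n:ℝ)^2 - i*n - j)) * Real.log ((n^2 - i*n - j).factorial))) +
      (∑ j ∈ Ico (i+1) n,
        ((((n:ℝ)^2 - c₂*n)/((n:ℝ)^2 - j*n)) * Real.log ((n^2 - j*n).factorial) -
         (((n:ℝ)^2 - 0*n)/((n:ℝ)^2 - j*n)) * Real.log ((n^2 - j*n).factorial))) := by
    rw [Finset.sum_sub_distrib, Finset.sum_sub_distrib]
    ring
  rw [e]
  refine le_trans (abs_add_le _ _) ?_
  calc _ ≤ ((i:ℝ)+1) * (2 * c₂ * n * Real.log n) + ((n:ℝ) - (i+1)) * (2 * c₂ * n * Real.log n) :=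
        add_le_add h1 h2
  _ = (n:ℝ) * (2 * c₂ * n * Real.log n) := by ring

lemma row_main (n i : ℕ) (hn : 2 ≤ n) (hi : i < n) :
    |row n 0 i - rowM n i| ≤
      (1 + 2*Real.log n) * (n:ℝ)^2 *
        ((∑ j ∈ range (i+1), (1:ℝ)/((n^2 - i*n - j : ℕ))) + (1 + Real.log n)/n) := by
  have hLn : 0 ≤ Real.log n := Real.log_natCast_nonneg n
  have hn0 : (0:ℝ) < n := by exact_mod_cast (by omega : 0 < n)
  rw [row_def]
  unfold rowM
  -- per-term estimate
  have key : ∀ (m : ℕ) (D : ℝ), ((m:ℝ) = D) → 1 ≤ m → m ≤ n^2 →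
      |(((n:ℝ)^2 - 0*n)/D) * Real.log m.factorial - (n:ℝ)^2 * (Real.log m - 1)|
        ≤ (1 + 2*Real.log n) * (n:ℝ)^2 * (1/(m:ℝ)) := by
    intro m D hD hm1 hmn
    have hmpos : (0:ℝ) < m := by exact_mod_cast hm1
    have hDpos : (0:ℝ) < D := by rw [← hD]; exact hmpos
    have e : (((n:ℝ)^2 - 0*n)/D) * Real.log m.factorial - (n:ℝ)^2 * (Real.log m - 1)
        = ((n:ℝ)^2/(m:ℝ)) * (Real.log m.factorial - (m:ℝ)*(Real.log m - 1)) := by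
      rw [← hD]
      field_simp
      ring
    rw [e, abs_mul, abs_of_nonneg (by positivity)]
    have h1 := log_fact_approx m hm1
    have h2 : Real.log m ≤ 2 * Real.log n := log_le_two_log n m (by omega) hmn
    calc (n:ℝ)^2/(m:ℝ) * |Real.log m.factorial - (m:ℝ)*(Real.log m - 1)|
        ≤ (n:ℝ)^2/(m:ℝ) * (1 + 2*Real.log n) := by
          apply mul_le_mul_of_nonneg_left (by linarith) (by positivity)
    _ = (1 + 2*Real.log n) * (n:ℝ)^2 * (1/(m:ℝ)) := by ring
  have h1 : |∑ j ∈ range (i+1),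
        ((((n:ℝ)^2 - 0*n)/((n:ℝ)^2 - i*n - j)) * Real.log ((n^2 - i*n - j).factorial) -
          (n:ℝ)^2 * (Real.log ((n^2 - i*n - j : ℕ)) - 1))|
      ≤ (1 + 2*Real.log n) * (n:ℝ)^2 * (∑ j ∈ range (i+1), (1:ℝ)/((n^2 - i*n - j : ℕ))) := by
    refine le_trans (Finset.abs_sum_le_sum_abs _ _) ?_
    rw [Finset.mul_sum]
    apply Finset.sum_le_sum
    intro j hj
    simp only [Finset.mem_range] at hj
    have hb := nsq_arith n i j hi hj
    exact key _ _ (cast_mu n i j hi hj) (by omega) (by omega)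
  have h2 : |∑ j ∈ Ico (i+1) n,
        ((((n:ℝ)^2 - 0*n)/((n:ℝ)^2 - j*n)) * Real.log ((n^2 - j*n).factorial) -
          (n:ℝ)^2 * (Real.log ((n^2 - j*n : ℕ)) - 1))|
      ≤ (1 + 2*Real.log n) * (n:ℝ)^2 * ((1 + Real.log n)/n) := by
    refine le_trans (Finset.abs_sum_le_sum_abs _ _) ?_
    have hb : ∀ j ∈ Ico (i+1) n,
        |(((n:ℝ)^2 - 0*n)/((n:ℝ)^2 - j*n)) * Real.log ((n^2 - j*n).factorial) -
          (n:ℝ)^2 * (Real.log ((n^2 - j*n : ℕ)) - 1)|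
        ≤ (1 + 2*Real.log n) * (n:ℝ)^2 * ((1/n) * (1/((n-j:ℕ):ℝ))) := by
      intro j hj
      simp only [Finset.mem_Ico] at hj
      have hjn := hj.2
      have hmn : n^2 - j*n ≤ n^2 := by omega
      have hm1 : 1 ≤ n^2 - j*n := by
        have := cast_nu_ge n j hjn
        have : (n:ℝ) ≤ ((n^2 - j*n : ℕ):ℝ) := this
        by_contra hc
        push_neg at hc
        interval_cases h : n^2 - j*n
        · simp at this; linarith
      refine le_trans (key _ _ (cast_nu n j hjn) hm1 hmn) ?_
      apply mul_le_mul_of_nonneg_left _ (by positivity)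
      rw [nu_eq]
      have hnj1 : 1 ≤ n - j := by omega
      have : (((n-j)*n : ℕ):ℝ) = ((n-j:ℕ):ℝ) * (n:ℝ) := by push_cast; ring
      rw [this]
      rw [one_div, mul_inv]
      rw [mul_comm]
      apply le_of_eq
      rw [one_div, one_div]
    refine le_trans (Finset.sum_le_sum hb) ?_
    rw [← Finset.mul_sum]
    apply mul_le_mul_of_nonneg_left _ (by positivity)
    rw [← Finset.mul_sum]
    calc (1/(n:ℝ)) * ∑ j ∈ Ico (i+1) n, (1:ℝ)/((n-j:ℕ))
        ≤ (1/(n:ℝ)) * (1 + Real.log n) := by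
          apply mul_le_mul_of_nonneg_left (nu_inv_sum n i) (by positivity)
    _ = (1 + Real.log n)/n := by ring
  have e : (∑ j ∈ range (i+1),
        (((n:ℝ)^2 - 0*n)/((n:ℝ)^2 - i*n - j)) * Real.log ((n^2 - i*n - j).factorial)) +
      (∑ j ∈ Ico (i+1) n,
        (((n:ℝ)^2 - 0*n)/((n:ℝ)^2 - j*n)) * Real.log ((n^2 - j*n).factorial)) -
      ((∑ j ∈ range (i+1), (n:ℝ)^2 * (Real.log ((n^2 - i*n - j : ℕ)) - 1)) +
        ∑ j ∈ Ico (i+1) n, (n:ℝ)^2 * (Real.log ((n^2 - j*n : ℕ)) - 1))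
      = (∑ j ∈ range (i+1),
          ((((n:ℝ)^2 - 0*n)/((n:ℝ)^2 - i*n - j)) * Real.log ((n^2 - i*n - j).factorial) -
            (n:ℝ)^2 * (Real.log ((n^2 - i*n - j : ℕ)) - 1))) +
        (∑ j ∈ Ico (i+1) n,
          ((((n:ℝ)^2 - 0*n)/((n:ℝ)^2 - j*n)) * Real.log ((n^2 - j*n).factorial) -
            (n:ℝ)^2 * (Real.log ((n^2 - j*n : ℕ)) - 1))) := by
    rw [Finset.sum_sub_distrib, Finset.sum_sub_distrib]
    ring
  rw [e]
  refine le_trans (abs_add_le _ _) (le_trans (add_le_add h1 h2) ?_)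
  rw [mul_add]


noncomputable def rowA (n : ℕ) (i : ℕ) : ℝ :=
  (∑ j ∈ range (i+1), (n:ℝ)^2 * (Real.log (((n-i)*n : ℕ)) - 1)) +
  ∑ j ∈ Ico (i+1) n, (n:ℝ)^2 * (Real.log ((n^2 - j*n : ℕ)) - 1)

lemma log_sub_log_le (a b : ℕ) (ha : 1 ≤ a) (hab : a ≤ b) :
    Real.log b - Real.log a ≤ ((b:ℝ) - a)/a := by
  have ha0 : (0:ℝ) < a := by exact_mod_cast ha
  have hb0 : (0:ℝ) < b := by exact_mod_cast (le_trans ha hab)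
  have h := Real.log_le_sub_one_of_pos (show (0:ℝ) < (b:ℝ)/a by positivity)
  rw [Real.log_div (by positivity) (by positivity)] at h
  have e : (b:ℝ)/a - 1 = ((b:ℝ)-a)/a := by field_simp
  linarith [e ▸ h]

lemma rowM_sub_rowA (n i : ℕ) (hn : 2 ≤ n) (hi : i < n) :
    |rowM n i - rowA n i| ≤ (n:ℝ)^3 * ∑ j ∈ range (i+1), (1:ℝ)/((n^2 - i*n - j : ℕ)) := by
  unfold rowM rowA
  have e : ∀ x y z : ℝ, x + z - (y + z) = x - y := by intro x y z; ring
  rw [e, ← Finset.sum_sub_distrib]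
  refine le_trans (Finset.abs_sum_le_sum_abs _ _) ?_
  rw [Finset.mul_sum]
  apply Finset.sum_le_sum
  intro j hj
  simp only [Finset.mem_range] at hj
  have harith := nsq_arith n i j hi hj
  have hm1 : 1 ≤ n^2 - i*n - j := by omega
  have hmb : n^2 - i*n - j ≤ (n-i)*n := by
    have := nu_eq n i
    omega
  have hdiff : ((n-i)*n : ℕ) - (n^2 - i*n - j) = j := by
    have := nu_eq n i
    omega
  have hm0 : (0:ℝ) < ((n^2 - i*n - j : ℕ):ℝ) := by exact_mod_cast hm1
  have e2 : (n:ℝ)^2 * (Real.log ((n^2 - i*n - j : ℕ)) - 1) -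
      (n:ℝ)^2 * (Real.log (((n-i)*n : ℕ)) - 1)
      = -((n:ℝ)^2 * (Real.log (((n-i)*n : ℕ)) - Real.log ((n^2 - i*n - j : ℕ)))) := by ring
  rw [e2, abs_neg]
  have hlogle : Real.log (((n-i)*n : ℕ)) - Real.log ((n^2 - i*n - j : ℕ))
      ≤ (j:ℝ)/((n^2 - i*n - j : ℕ)) := by
    have h := log_sub_log_le (n^2 - i*n - j) ((n-i)*n) hm1 hmb
    have ecast : (((n-i)*n : ℕ):ℝ) - ((n^2 - i*n - j : ℕ):ℝ) = (j:ℝ) := by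
      rw [← Nat.cast_sub (by omega), hdiff]
    rw [ecast] at h
    exact h
  have hlogge : 0 ≤ Real.log (((n-i)*n : ℕ)) - Real.log ((n^2 - i*n - j : ℕ)) := by
    have : ((n^2 - i*n - j : ℕ):ℝ) ≤ (((n-i)*n : ℕ):ℝ) := by exact_mod_cast hmb
    have := Real.log_le_log hm0 this
    linarith
  rw [abs_of_nonneg (by positivity)]
  calc (n:ℝ)^2 * (Real.log (((n-i)*n : ℕ)) - Real.log ((n^2 - i*n - j : ℕ)))
      ≤ (n:ℝ)^2 * ((j:ℝ)/((n^2 - i*n - j : ℕ))) :=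
        mul_le_mul_of_nonneg_left hlogle (by positivity)
  _ ≤ (n:ℝ)^3 * (1/((n^2 - i*n - j : ℕ))) := by
      rw [div_eq_mul_one_div]
      rw [show (n:ℝ)^2 * ((j:ℝ) * (1/((n^2 - i*n - j : ℕ)))) =
        (j:ℝ) * ((n:ℝ)^2 * (1/((n^2 - i*n - j : ℕ)))) by ring,
        show (n:ℝ)^3 * (1/((n^2 - i*n - j : ℕ))) =
        (n:ℝ) * ((n:ℝ)^2 * (1/((n^2 - i*n - j : ℕ)))) by ring]
      apply mul_le_mul_of_nonneg_right _ (by positivity)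
      exact_mod_cast (show (j:ℕ) ≤ n by omega)

lemma log_two_le (n : ℕ) (hn : 2 ≤ n) : (1:ℝ) ≤ 2 * Real.log n := by
  have h1 : Real.log 2 ≤ Real.log n := by
    have : ((2:ℕ):ℝ) ≤ (n:ℝ) := by exact_mod_cast hn
    calc Real.log 2 = Real.log ((2:ℕ):ℝ) := by norm_num
    _ ≤ Real.log n := Real.log_le_log (by norm_num) this
  have h2 := Real.log_two_gt_d9
  linarith

lemma sum_rowA (n : ℕ) (hn : 2 ≤ n) :
    |∑ i ∈ range n, rowA n i - (2*(n:ℝ)^4 * Real.log n - 2.5*(n:ℝ)^4)| ≤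
      20*(n:ℝ)^3 * Real.log n := by
  have hLn : 0 ≤ Real.log n := Real.log_natCast_nonneg n
  have hL1 : (1:ℝ) ≤ 2 * Real.log n := log_two_le n hn
  have hnR : (2:ℝ) ≤ n := by exact_mod_cast hn
  -- closed form
  have step1 : ∑ i ∈ range n, rowA n i =
      (n:ℝ)^2 * ∑ k ∈ range n, (2*(k:ℝ)+1) * (Real.log (((n-k)*n : ℕ)) - 1) := by
    unfold rowA
    rw [Finset.sum_add_distrib]
    have e1 : ∑ i ∈ range n, ∑ j ∈ range (i+1), (n:ℝ)^2 * (Real.log (((n-i)*n : ℕ)) - 1)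
        = ∑ i ∈ range n, ((i:ℝ)+1) * ((n:ℝ)^2 * (Real.log (((n-i)*n : ℕ)) - 1)) := by
      apply Finset.sum_congr rfl
      intro i _
      rw [Finset.sum_const, Finset.card_range, nsmul_eq_mul]
      push_cast; ring
    have e2 : ∑ i ∈ range n, ∑ j ∈ Ico (i+1) n, (n:ℝ)^2 * (Real.log ((n^2 - j*n : ℕ)) - 1)
        = ∑ j ∈ range n, (j:ℝ) * ((n:ℝ)^2 * (Real.log (((n-j)*n : ℕ)) - 1)) := by
      rw [sum_Ico_swap n (fun j => (n:ℝ)^2 * (Real.log ((n^2 - j*n : ℕ)) - 1))]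
      apply Finset.sum_congr rfl
      intro j _
      rw [nu_eq]
    rw [e1, e2, ← Finset.sum_add_distrib, Finset.mul_sum]
    apply Finset.sum_congr rfl
    intro k _
    ring
  -- split the log
  have step2 : ∑ k ∈ range n, (2*(k:ℝ)+1) * (Real.log (((n-k)*n : ℕ)) - 1)
      = (n:ℝ)^2 * (Real.log n - 1) +
        ∑ k ∈ range n, (2*(k:ℝ)+1) * Real.log ((n-k : ℕ)) := by
    have e : ∀ k ∈ range n, (2*(k:ℝ)+1) * (Real.log (((n-k)*n : ℕ)) - 1)
        = (2*(k:ℝ)+1) * (Real.log n - 1) + (2*(k:ℝ)+1) * Real.log ((n-k : ℕ)) := by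
      intro k hk
      simp only [Finset.mem_range] at hk
      have h1 : 1 ≤ n - k := by omega
      have hcast : (((n-k)*n : ℕ):ℝ) = ((n-k : ℕ):ℝ) * (n:ℝ) := by push_cast; ring
      have hlog : Real.log (((n-k)*n : ℕ)) = Real.log ((n-k : ℕ)) + Real.log n := by
        rw [hcast, Real.log_mul]
        · exact_mod_cast Nat.one_le_iff_ne_zero.mp (by exact_mod_cast h1)
        · exact_mod_cast (by omega : n ≠ 0)
      rw [hlog]; ring
    rw [Finset.sum_congr rfl e, Finset.sum_add_distrib, ← Finset.sum_mul,
      sum_two_mul_add_one]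
  -- reflect
  have step3 : ∑ k ∈ range n, (2*(k:ℝ)+1) * Real.log ((n-k : ℕ))
      = (2*(n:ℝ)+1) * Real.log (n.factorial) -
        2 * ∑ k ∈ range n, ((k:ℝ)+1) * Real.log (k+1) := by
    rw [← Finset.sum_range_reflect (fun k => (2*(k:ℝ)+1) * Real.log ((n-k : ℕ))) n]
    have e : ∀ k ∈ range n,
        (2*((n - 1 - k : ℕ):ℝ)+1) * Real.log ((n-(n-1-k) : ℕ))
        = (2*(n:ℝ)+1) * Real.log ((k:ℝ)+1) - 2*(((k:ℝ)+1) * Real.log ((k:ℝ)+1)) := by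
      intro k hk
      simp only [Finset.mem_range] at hk
      have h1 : n - (n-1-k) = k+1 := by omega
      have h2 : ((n - 1 - k : ℕ):ℝ) = (n:ℝ) - 1 - k := by
        rw [Nat.cast_sub (by omega), Nat.cast_sub (by omega)]
        push_cast; ring
      rw [h1, h2]
      have : ((k+1 : ℕ):ℝ) = (k:ℝ)+1 := by push_cast; ring
      rw [this]
      ring
    rw [Finset.sum_congr rfl e, Finset.sum_sub_distrib, ← Finset.mul_sum, ← Finset.mul_sum,
      log_factorial_sum]
  have e₁ := log_factorial_ge n (by omega)
  have e₁' := log_factorial_le n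
  have e₂ := sum_mul_log n
  rw [step1, step2, step3]
  set F := Real.log (n.factorial) with hF
  set K := ∑ k ∈ range n, ((k:ℝ)+1) * Real.log (k+1) with hK
  set L := Real.log n with hL
  rw [abs_le] at e₂ ⊢
  obtain ⟨e₂l, e₂r⟩ := e₂
  have hLn2 : L ≤ (n:ℝ) := by
    have := Real.log_le_sub_one_of_pos (show (0:ℝ) < n by linarith)
    rw [← hL] at this
    linarith
  have hn3 : (0:ℝ) ≤ (n:ℝ)^2*(2*(n:ℝ)+1) := by positivity
  have hF1 : (n:ℝ)^2*(2*(n:ℝ)+1)*F ≤ (n:ℝ)^2*(2*(n:ℝ)+1)*((n:ℝ)*L-(n:ℝ)+1+L) := by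
    apply mul_le_mul_of_nonneg_left _ hn3
    linarith
  have hF2 : (n:ℝ)^2*(2*(n:ℝ)+1)*((n:ℝ)*L-(n:ℝ)) ≤ (n:ℝ)^2*(2*(n:ℝ)+1)*F := by
    apply mul_le_mul_of_nonneg_left _ hn3
    linarith
  have hK1 : 2*(n:ℝ)^2*K ≤ 2*(n:ℝ)^2*((n:ℝ)^2*L/2 - (n:ℝ)^2/4 + (n:ℝ)*(1+L)) := by
    apply mul_le_mul_of_nonneg_left _ (by positivity)
    linarith
  have hK2 : 2*(n:ℝ)^2*((n:ℝ)^2*L/2 - (n:ℝ)^2/4 - (n:ℝ)*(1+L)) ≤ 2*(n:ℝ)^2*K := by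
    apply mul_le_mul_of_nonneg_left _ (by positivity)
    linarith
  have ha : (n:ℝ)^3 ≤ 2*(n:ℝ)^3*L := by nlinarith [hL1, (show (0:ℝ) ≤ (n:ℝ)^3 by positivity)]
  have hb : (n:ℝ)^2 ≤ 2*(n:ℝ)^2*L := by nlinarith [hL1, (show (0:ℝ) ≤ (n:ℝ)^2 by positivity)]
  have hc : (n:ℝ)^2 ≤ (n:ℝ)^3 := by nlinarith
  have hd : (n:ℝ)^2*L ≤ (n:ℝ)^3*L := by nlinarith [hLn]
  have he : (n:ℝ)^2*L ≤ 2*(n:ℝ)^3*L := by nlinarith [hLn]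
  constructor <;> nlinarith [hF1, hF2, hK1, hK2, ha, hb, hc, hd, he]

end SUaux

open SUaux

/-- For fixed constants `c₁, c₂ = O(1)`, the bound for the partly filled Sudoku has
the same leading asymptotics as the unconstrained bound:
`ln S_U(n; c₁, c₂) = 2 n⁴ ln n − 2.5 n⁴ + O(n³ ln n)`. -/
theorem log_SUpf_asymptotic_const (c₁ c₂ : ℕ) :
    ∃ C : ℝ, ∀ n : ℕ, 2 ≤ n → c₁ ≤ n → c₂ ≤ n →
      |Real.log (SUpf n c₁ c₂) -
          (2 * (n : ℝ) ^ 4 * Real.log n - 2.5 * (n : ℝ) ^ 4)| ≤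
        C * (n : ℝ) ^ 3 * Real.log n := by
  refine ⟨2*c₁*c₂ + 100, ?_⟩
  intro n hn hc₁ hc₂
  have hLn : 0 ≤ Real.log n := Real.log_natCast_nonneg n
  have hL1 : (1:ℝ) ≤ 2 * Real.log n := log_two_le n hn
  have hnR : (2:ℝ) ≤ n := by exact_mod_cast hn
  have hLn2 : Real.log n ≤ (n:ℝ) := by
    have := Real.log_le_sub_one_of_pos (show (0:ℝ) < n by linarith)
    linarith
  set L := Real.log n with hL
  set T := ∑ i ∈ range n, row n 0 i with hT
  set M := ∑ i ∈ range n, rowM n i with hM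
  set A := ∑ i ∈ range n, rowA n i with hA
  -- |logS - T|
  have h1 : |Real.log (SUpf n c₁ c₂) - T| ≤ 2*(c₁:ℝ)*c₂*(n:ℝ)^2*L := by
    rw [log_SUpf_eq]
    have hsplit : T = (∑ i ∈ range c₁, row n 0 i) + ∑ i ∈ Ico c₁ n, row n 0 i := by
      rw [hT]
      exact (Finset.sum_range_add_sum_Ico _ hc₁).symm
    rw [hsplit]
    have e : (∑ i ∈ range c₁, row n (c₂:ℝ) i) + (∑ i ∈ Ico c₁ n, row n 0 i) -
        ((∑ i ∈ range c₁, row n 0 i) + ∑ i ∈ Ico c₁ n, row n 0 i)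
        = ∑ i ∈ range c₁, (row n (c₂:ℝ) i - row n 0 i) := by
      rw [Finset.sum_sub_distrib]; ring
    rw [e]
    refine le_trans (Finset.abs_sum_le_sum_abs _ _) ?_
    have hb : ∀ i ∈ range c₁, |row n (c₂:ℝ) i - row n 0 i| ≤ (n:ℝ) * (2 * c₂ * n * L) := by
      intro i hi
      simp only [Finset.mem_range] at hi
      exact row_diff n c₂ i hn (by omega)
    refine le_trans (Finset.sum_le_sum hb) ?_
    rw [Finset.sum_const, Finset.card_range, nsmul_eq_mul]
    have hc₁R : (c₁:ℝ) ≤ n := by exact_mod_cast hc₁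
    have : (0:ℝ) ≤ (n:ℝ) * (2 * c₂ * n * L) := by positivity
    nlinarith [this, mul_le_mul_of_nonneg_right hc₁R this]
  -- μ inverse sums
  have hS : ∑ i ∈ range n, ∑ j ∈ range (i+1), (1:ℝ)/((n^2 - i*n - j : ℕ)) ≤ 1 + 2*L := by
    have h := mu_inv_sum n (fun m => (1:ℝ)/m) (fun m => by positivity)
    have h2 := inv_sum_Icc (n^2)
    have h3 : Real.log ((n^2 : ℕ)) = 2*L := by
      push_cast; rw [Real.log_pow]; push_cast; ring
    calc _ ≤ ∑ m ∈ Icc 1 (n^2), (1:ℝ)/m := h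
    _ ≤ 1 + Real.log ((n^2 : ℕ)) := h2
    _ = 1 + 2*L := by rw [h3]
  have hSnn : ∀ i, 0 ≤ ∑ j ∈ range (i+1), (1:ℝ)/((n^2 - i*n - j : ℕ)) := by
    intro i; apply Finset.sum_nonneg; intro j _; positivity
  -- |T - M|
  have h2 : |T - M| ≤ (1 + 2*L) * (n:ℝ)^2 * ((1 + 2*L) + (n:ℝ)*((1+L)/n)) := by
    rw [hT, hM, ← Finset.sum_sub_distrib]
    refine le_trans (Finset.abs_sum_le_sum_abs _ _) ?_
    have hb : ∀ i ∈ range n, |row n 0 i - rowM n i| ≤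
        (1 + 2*L) * (n:ℝ)^2 *
          ((∑ j ∈ range (i+1), (1:ℝ)/((n^2 - i*n - j : ℕ))) + (1+L)/n) := by
      intro i hi
      simp only [Finset.mem_range] at hi
      exact row_main n i hn hi
    refine le_trans (Finset.sum_le_sum hb) ?_
    have e : ∑ i ∈ range n, (1 + 2*L) * (n:ℝ)^2 *
          ((∑ j ∈ range (i+1), (1:ℝ)/((n^2 - i*n - j : ℕ))) + (1+L)/n)
        = (1 + 2*L) * (n:ℝ)^2 *
          ((∑ i ∈ range n, ∑ j ∈ range (i+1), (1:ℝ)/((n^2 - i*n - j : ℕ))) + (n:ℝ)*((1+L)/n)) := by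
      rw [← Finset.mul_sum, Finset.sum_add_distrib, Finset.sum_const, Finset.card_range,
        nsmul_eq_mul]
    rw [e]
    apply mul_le_mul_of_nonneg_left _ (by positivity)
    have : (0:ℝ) ≤ (n:ℝ)*((1+L)/n) := by positivity
    linarith [hS]
  -- |M - A|
  have h3 : |M - A| ≤ (n:ℝ)^3 * (1 + 2*L) := by
    rw [hM, hA, ← Finset.sum_sub_distrib]
    refine le_trans (Finset.abs_sum_le_sum_abs _ _) ?_
    have hb : ∀ i ∈ range n, |rowM n i - rowA n i| ≤
        (n:ℝ)^3 * ∑ j ∈ range (i+1), (1:ℝ)/((n^2 - i*n - j : ℕ)) := by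
      intro i hi
      simp only [Finset.mem_range] at hi
      exact rowM_sub_rowA n i hn hi
    refine le_trans (Finset.sum_le_sum hb) ?_
    rw [← Finset.mul_sum]
    apply mul_le_mul_of_nonneg_left hS (by positivity)
  have h4 := sum_rowA n hn
  rw [← hL] at h4
  -- combine
  have tri : |Real.log (SUpf n c₁ c₂) - (2 * (n:ℝ)^4 * L - 2.5 * (n:ℝ)^4)| ≤
      |Real.log (SUpf n c₁ c₂) - T| + |T - M| + |M - A| +
      |A - (2*(n:ℝ)^4 * L - 2.5*(n:ℝ)^4)| := by
    have e : Real.log (SUpf n c₁ c₂) - (2 * (n:ℝ)^4 * L - 2.5 * (n:ℝ)^4)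
        = (Real.log (SUpf n c₁ c₂) - T) + (T - M) + (M - A) +
          (A - (2*(n:ℝ)^4 * L - 2.5*(n:ℝ)^4)) := by ring
    rw [e]
    refine le_trans (abs_add_le _ _) (add_le_add (le_trans (abs_add_le _ _)
      (add_le_add (abs_add_le _ _) le_rfl)) le_rfl)
  refine le_trans tri ?_
  have hc₁c₂ : (0:ℝ) ≤ (c₁:ℝ)*c₂ := by positivity
  -- bound the pieces by multiples of n³L
  have hn2L : (n:ℝ)^2*L ≤ (n:ℝ)^3*L := by nlinarith [mul_le_mul_of_nonneg_right (show (n:ℝ)^2 ≤ (n:ℝ)^3 by nlinarith) hLn]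
  have hp1 : 2*(c₁:ℝ)*c₂*(n:ℝ)^2*L ≤ 2*(c₁:ℝ)*c₂*(n:ℝ)^3*L := by nlinarith
  have hp2 : (1 + 2*L) * (n:ℝ)^2 * ((1 + 2*L) + (n:ℝ)*((1+L)/n)) ≤ 28*(n:ℝ)^3*L := by
    have hne : (n:ℝ) ≠ 0 := by linarith
    have e : (n:ℝ)*((1+L)/n) = 1+L := by field_simp
    rw [e]
    have h12 : (1 + 2*L) ≤ 4*L := by linarith
    have h13 : (1 + 2*L) + (1+L) ≤ 7*L := by linarith
    calc (1 + 2*L) * (n:ℝ)^2 * ((1 + 2*L) + (1+L)) ≤ (4*L) * (n:ℝ)^2 * (7*L) := by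
          apply mul_le_mul (mul_le_mul_of_nonneg_right h12 (by positivity)) h13 (by linarith)
            (by positivity)
    _ = 28 * ((n:ℝ)^2*L) * L := by ring
    _ ≤ 28*(n:ℝ)^3*L := by nlinarith [mul_le_mul_of_nonneg_right hLn2 (show (0:ℝ) ≤ 28*(n:ℝ)^2*L by positivity)]
  have hp3 : (n:ℝ)^3 * (1 + 2*L) ≤ 4*(n:ℝ)^3*L := by nlinarith [mul_le_mul_of_nonneg_left hL1 (show (0:ℝ) ≤ (n:ℝ)^3 by positivity)]
  nlinarith [hp1, hp2, hp3, h1, h2, h3, h4, hc₁c₂,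
    mul_le_mul_of_nonneg_right hn2L hc₁c₂]
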